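/- arXiv:1412.5797 — 9 statements merged into one kernel-verified Lean document; each statement's English description precedes it below -/
import Mathlib

section
/- Let p be an odd prime and R = ℤ[i]/pℤ[i]. If β ∈ R satisfies N(β) = 1, then 1 + β is either zero or not a zero divisor of R. -/
/-- The ring `ℤ[i]/pℤ[i]`, modeled as pairs `(a, b)` over `ℤ/pℤ` representing `a + bi`. -/
abbrev R (p : ℕ) := ZMod p × ZMod p

/-- Multiplication in `ℤ[i]/pℤ[i]`. -/
def Gmul {p : ℕ} (β γ : R p) : R p := (β.1 * γ.1 - β.2 * γ.2, β.1 * γ.2 + β.2 * γ.1)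

/-- The norm `N(a+bi) = a² + b²`. -/
def Gnorm {p : ℕ} (β : R p) : ZMod p := β.1 ^ 2 + β.2 ^ 2

/-- If `N(β) = 1` in `ℤ[i]/pℤ[i]`, `p` an odd prime, then `1 + β` is zero or
not a zero divisor. -/
theorem one_add_not_zero_divisor (p : ℕ) (hp : p.Prime) (hodd : p ≠ 2) (β : R p)
    (hβ : Gnorm β = 1) :
    ((1 : ZMod p), (0 : ZMod p)) + β = 0 ∨
      ∀ γ : R p, Gmul (((1 : ZMod p), (0 : ZMod p)) + β) γ = 0 → γ = 0 := by
  haveI : Fact p.Prime := ⟨hp⟩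
  obtain ⟨a, b⟩ := β
  simp only [Gnorm] at hβ
  by_cases ha : (1 : ZMod p) + a = 0
  · left
    have ha' : a = -1 := by linear_combination ha
    have hb2 : b ^ 2 = 0 := by
      have : a ^ 2 = 1 := by rw [ha']; ring
      linear_combination hβ - this
    have hb : b = 0 := by
      exact pow_eq_zero_iff (n := 2) (by norm_num) |>.mp hb2
    rw [Prod.ext_iff]
    constructor <;> simp [ha', hb]
  · right
    intro ⟨c, d⟩ hγ
    simp only [Gmul, Prod.mk_add_mk, Prod.ext_iff, Prod.mk.injEq, Prod.fst_zero,
      Prod.snd_zero] at hγ ⊢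
    obtain ⟨h1, h2⟩ := hγ
    have h2ne : (2 : ZMod p) ≠ 0 := by
      intro h
      have hdvd : (p : ℕ) ∣ 2 :=
        (ZMod.natCast_eq_zero_iff 2 p).mp (by exact_mod_cast h)
      exact hodd ((Nat.prime_dvd_prime_iff_eq hp Nat.prime_two).mp hdvd)
    have hN : (2 : ZMod p) * (1 + a) ≠ 0 := mul_ne_zero h2ne ha
    have hc : (2 : ZMod p) * (1 + a) * c = 0 := by
      linear_combination (1 + a) * h1 + b * h2 - c * hβ
    have hd : (2 : ZMod p) * (1 + a) * d = 0 := by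
      linear_combination (1 + a) * h2 - b * h1 - d * hβ
    exact ⟨by
      rcases mul_eq_zero.mp hc with h | h
      · exact absurd h hN
      · exact h, by
      rcases mul_eq_zero.mp hd with h | h
      · exact absurd h hN
      · exact h⟩
end

section
/- Let p be an odd prime, R = ℤ[i]/pℤ[i], and H = {β ∈ R : N(β) = 1}. For any nonzero γ ∈ R (including zero divisors), the set γH = {γβ : β ∈ H} has the same cardinality as H. -/
lemma aux_key (p : ℕ) [Fact p.Prime] (hodd : p ≠ 2) (a b c d e f : ZMod p)
    (hab : ¬(a = 0 ∧ b = 0)) (h1 : c^2+d^2 = 1) (h2 : e^2+f^2 = 1)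
    (e1 : a*c - b*d = a*e - b*f) (e2 : a*d + b*c = a*f + b*e) :
    c = e ∧ d = f := by
  have h2ne : (2 : ZMod p) ≠ 0 := by
    have : ((2 : ℕ) : ZMod p) ≠ 0 := by
      rw [Ne, ZMod.natCast_eq_zero_iff]
      intro h
      exact hodd ((Nat.prime_dvd_prime_iff_eq (Fact.out) Nat.prime_two).mp h)
    simpa using this
  have hone : (1 : ZMod p) ≠ 0 := one_ne_zero
  have hu : a*(c-e) = b*(d-f) := by linear_combination e1
  have hv : b*(c-e) = -(a*(d-f)) := by linear_combination e2
  by_cases hn : a^2 + b^2 = 0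
  · -- degenerate case: γ is a zero divisor
    have ha : a ≠ 0 := by
      intro h
      apply hab
      refine ⟨h, ?_⟩
      have : b^2 = 0 := by linear_combination hn - a*h
      exact pow_eq_zero_iff (n := 2) (by norm_num) |>.mp this
    have hnd : (c-e)*(c+e) + (d-f)*(d+f) = 0 := by linear_combination h1 - h2
    have hbnd : (d-f) * (b*(d+f) - a*(c+e)) = 0 := by
      linear_combination b*hnd - (c+e)*hv
    have hvz : d - f = 0 := by
      by_contra hvz
      have hfac : b*(d+f) - a*(c+e) = 0 := by
        rcases mul_eq_zero.mp hbnd with h | h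
        · exact absurd h hvz
        · exact h
      have hac : 2*(a*c) = 2*(b*d) := by linear_combination hu - hfac
      have hacbd : a*c = b*d := mul_left_cancel₀ h2ne hac
      have hsq : a^2*c^2 = b^2*d^2 := by linear_combination (a*c+b*d)*hacbd
      have ha2 : a^2 * (c^2+d^2) = 0 := by linear_combination hsq + d^2*hn
      rw [h1, mul_one] at ha2
      exact ha (pow_eq_zero_iff (n := 2) (by norm_num) |>.mp ha2)
    have huz : c - e = 0 := by
      have : a*(c-e) = 0 := by rw [hu, hvz, mul_zero]
      exact (mul_eq_zero.mp this).resolve_left ha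
    exact ⟨sub_eq_zero.mp huz, sub_eq_zero.mp hvz⟩
  · -- nondegenerate case: γ has nonzero norm
    have hU : (a^2+b^2)*(c-e) = 0 := by linear_combination a*hu + b*hv
    have hV : (a^2+b^2)*(d-f) = 0 := by linear_combination a*hv - b*hu
    have huz : c - e = 0 := (mul_eq_zero.mp hU).resolve_left hn
    have hvz : d - f = 0 := (mul_eq_zero.mp hV).resolve_left hn
    exact ⟨sub_eq_zero.mp huz, sub_eq_zero.mp hvz⟩

/-- For `p` an odd prime and any nonzero `γ ∈ ℤ[i]/pℤ[i]` (possibly a zero divisor),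
the set `γH = {γβ : N(β) = 1}` has the same cardinality as `H = {β : N(β) = 1}`. -/
theorem card_coset (p : ℕ) [Fact p.Prime] (hodd : p ≠ 2) (γ : R p) (hγ : γ ≠ 0) :
    ((Finset.univ.filter (fun β : R p => Gnorm β = 1)).image (fun β => Gmul γ β)).card =
      (Finset.univ.filter (fun β : R p => Gnorm β = 1)).card := by
  apply Finset.card_image_of_injOn
  intro β₁ hβ₁ β₂ hβ₂ heq
  have hn1 : Gnorm β₁ = 1 := (Finset.mem_filter.mp hβ₁).2
  have hn2 : Gnorm β₂ = 1 := (Finset.mem_filter.mp hβ₂).2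
  have hab : ¬(γ.1 = 0 ∧ γ.2 = 0) := by
    rintro ⟨h1, h2⟩
    exact hγ (Prod.ext h1 h2)
  unfold Gnorm at hn1 hn2
  unfold Gmul at heq
  have e1 := congrArg Prod.fst heq
  have e2 := congrArg Prod.snd heq
  simp only at e1 e2
  obtain ⟨hc, hd⟩ := aux_key p hodd γ.1 γ.2 β₁.1 β₁.2 β₂.1 β₂.2 hab hn1 hn2 e1 e2
  exact Prod.ext hc hd
end

section
/- Let p be an odd prime, and for c ∈ ℤ/pℤ with c ≠ 0, define N_p(c) = {N(1+β) : β ∈ ℤ[i]/pℤ[i], N(β) = c} ⊆ ℤ/pℤ. Then |N_p(c)| = n + 1 if c is a nonzero quadratic residue mod p, and |N_p(c)| = n if c is a quadratic non-residue mod p, where n = 2[p/4] and the set of norm-c elements has cardinality 2n. -/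
open Finset

variable {p : ℕ} [Fact p.Prime]

private lemma chi_sum_mul (hodd : p ≠ 2) (c : ZMod p) (hc : c ≠ 0) :
    ∑ t : ZMod p, quadraticChar (ZMod p) (t * (t - c)) = -1 := by
  have hchar : ringChar (ZMod p) ≠ 2 := by
    rw [ZMod.ringChar_zmod_n]; exact hodd
  set χ := quadraticChar (ZMod p) with hχ
  have h0 : ∑ t : ZMod p, χ (t * (t - c)) = ∑ t ∈ univ \ {0}, χ (t * (t - c)) := by
    rw [Finset.sum_sdiff_eq_sub (Finset.subset_univ _)]
    simp [hχ, quadraticChar_zero]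
  rw [h0]
  have h1 : ∀ t ∈ univ \ ({0} : Finset (ZMod p)), χ (t * (t - c)) = χ (1 - c * t⁻¹) := by
    intro t ht
    simp only [mem_sdiff, mem_singleton, mem_univ, true_and] at ht
    have : t * (t - c) = t ^ 2 * (1 - c * t⁻¹) := by field_simp
    rw [this, map_mul, quadraticChar_sq_one' ht, one_mul]
  rw [Finset.sum_congr rfl h1]
  have h2 : ∑ t ∈ univ \ ({0} : Finset (ZMod p)), χ (1 - c * t⁻¹)
      = ∑ s ∈ univ \ ({1} : Finset (ZMod p)), χ s := by
    apply Finset.sum_nbij' (fun t => 1 - c * t⁻¹) (fun s => c * (1 - s)⁻¹)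
    · intro t ht
      simp only [mem_sdiff, mem_singleton, mem_univ, true_and] at ht ⊢
      intro h
      apply hc
      have : c * t⁻¹ = 0 := by linear_combination -h
      rcases mul_eq_zero.mp this with h' | h'
      · exact h'
      · exact absurd (inv_eq_zero.mp h') ht
    · intro s hs
      simp only [mem_sdiff, mem_singleton, mem_univ, true_and] at hs ⊢
      have h1s : (1 : ZMod p) - s ≠ 0 := sub_ne_zero.mpr (Ne.symm hs)
      exact mul_ne_zero hc (inv_ne_zero h1s)
    · intro t ht
      simp only [mem_sdiff, mem_singleton, mem_univ, true_and] at ht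
      field_simp
      rw [sub_sub_cancel, div_self hc]
    · intro s hs
      simp only [mem_sdiff, mem_singleton, mem_univ, true_and] at hs
      have h1s : (1 : ZMod p) - s ≠ 0 := sub_ne_zero.mpr (Ne.symm hs)
      field_simp
      ring
    · intro t ht; rfl
  rw [h2, Finset.sum_sdiff_eq_sub (Finset.subset_univ _)]
  rw [quadraticChar_sum_zero hchar]
  simp

private lemma chi_sum_sq_sub (hodd : p ≠ 2) (c : ZMod p) (hc : c ≠ 0) :
    ∑ a : ZMod p, quadraticChar (ZMod p) (a ^ 2 - c) = -1 := by
  have hchar : ringChar (ZMod p) ≠ 2 := by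
    rw [ZMod.ringChar_zmod_n]; exact hodd
  set χ := quadraticChar (ZMod p) with hχ
  have key : ∑ a : ZMod p, χ (a ^ 2 - c)
      = ∑ t : ZMod p, ((univ.filter fun x : ZMod p => x ^ 2 = t).card : ℤ) * χ (t - c) := by
    rw [Finset.sum_comp (fun t => χ (t - c)) (fun a : ZMod p => a ^ 2)]
    rw [Finset.sum_subset (Finset.subset_univ _)]
    · simp [mul_comm]
    · intro t _ ht
      have : (univ.filter fun x : ZMod p => x ^ 2 = t).card = 0 := by
        rw [Finset.card_eq_zero, Finset.filter_eq_empty_iff]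
        intro x _
        intro hx
        exact ht (Finset.mem_image.mpr ⟨x, mem_univ x, hx⟩)
      simp [this]
  have hcard : ∀ t : ZMod p, ((univ.filter fun x : ZMod p => x ^ 2 = t).card : ℤ) = χ t + 1 := by
    intro t
    have := quadraticChar_card_sqrts hchar t
    rw [← this]
    congr 1
    rw [Set.toFinset_setOf]
  rw [key]
  have : ∑ t : ZMod p, ((univ.filter fun x : ZMod p => x ^ 2 = t).card : ℤ) * χ (t - c)
      = ∑ t : ZMod p, (χ t * χ (t - c) + χ (t - c)) := by
    apply Finset.sum_congr rfl
    intro t _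
    rw [hcard t]; ring
  rw [this, Finset.sum_add_distrib]
  have hshift : ∑ t : ZMod p, χ (t - c) = 0 := by
    rw [← quadraticChar_sum_zero hchar]
    exact Fintype.sum_equiv (Equiv.subRight c) _ _ (fun t => rfl)
  have hmul : ∑ t : ZMod p, χ t * χ (t - c) = -1 := by
    have : ∀ t : ZMod p, χ t * χ (t - c) = χ (t * (t - c)) := fun t => (map_mul χ _ _).symm
    rw [Finset.sum_congr rfl (fun t _ => this t)]
    exact chi_sum_mul hodd c hc
  rw [hshift, hmul]; ring

/-- For `p` an odd prime, `n = 2[p/4]` (so `p = 2n+1` if `p ≡ 1 (mod 4)` and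
`p = 2n-1` if `p ≡ 3 (mod 4)`) and `c ≠ 0` in `ℤ/pℤ`, the set
`N_p(c) = {N(1+β) : N(β) = c}` has `n+1` elements if `c` is a (nonzero) quadratic
residue and `n` elements otherwise. -/
theorem card_Np (p n : ℕ) [Fact p.Prime] (hodd : p ≠ 2)
    (hn : if p % 4 = 1 then p = 2 * n + 1 else p = 2 * n - 1)
    (c : ZMod p) (hc : c ≠ 0) :
    (IsSquare c →
      ((Finset.univ.filter (fun β : R p => Gnorm β = c)).image
        (fun β => Gnorm (((1 : ZMod p), (0 : ZMod p)) + β))).card = n + 1) ∧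
    (¬ IsSquare c →
      ((Finset.univ.filter (fun β : R p => Gnorm β = c)).image
        (fun β => Gnorm (((1 : ZMod p), (0 : ZMod p)) + β))).card = n) := by
  have hp2 : 2 ≤ p := (Fact.out : p.Prime).two_le
  have hchar : ringChar (ZMod p) ≠ 2 := by rw [ZMod.ringChar_zmod_n]; exact hodd
  set χ := quadraticChar (ZMod p) with hχ
  have h2ne : (2 : ZMod p) ≠ 0 := by
    have h' : ((2:ℕ) : ZMod p) ≠ 0 := by
      rw [Ne, ZMod.natCast_eq_zero_iff]
      exact fun h => hodd ((Nat.prime_dvd_prime_iff_eq Fact.out Nat.prime_two).mp h)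
    simpa using h'
  set A : Finset (ZMod p) := univ.filter (fun a : ZMod p => IsSquare (c - a^2)) with hA
  have himg : ((Finset.univ.filter (fun β : R p => Gnorm β = c)).image
        (fun β => Gnorm (((1 : ZMod p), (0 : ZMod p)) + β)))
      = A.image (fun a => 1 + 2*a + c) := by
    ext x
    simp only [Finset.mem_image, Finset.mem_filter, Finset.mem_univ, true_and, hA]
    constructor
    · rintro ⟨⟨a, b⟩, hab, rfl⟩
      simp only [Gnorm, Prod.fst_add, Prod.snd_add] at hab ⊢
      exact ⟨a, ⟨b, by linear_combination -hab⟩, by linear_combination -hab⟩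
    · rintro ⟨a, ⟨r, hr⟩, rfl⟩
      refine ⟨(a, r), ?_, ?_⟩
      · simp only [Gnorm]; linear_combination -hr
      · simp only [Gnorm, Prod.fst_add, Prod.snd_add]; linear_combination -hr
  have hinj : Function.Injective (fun a : ZMod p => 1 + 2*a + c) := by
    intro x y h
    simp only at h
    exact mul_left_cancel₀ h2ne (by linear_combination h)
  have hsqc : ∀ t : ZMod p, ((univ.filter fun x : ZMod p => x ^ 2 = t).card : ℤ) = χ t + 1 := by
    intro t
    have h := quadraticChar_card_sqrts hchar t
    rw [← h]
    congr 1
    rw [Set.toFinset_setOf]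
  have hAcard : (2 * A.card : ℤ) = p + 1 + χ c - χ (-1) := by
    have h1 : (2 * A.card : ℤ) = ∑ a : ZMod p, (if IsSquare (c - a^2) then (2:ℤ) else 0) := by
      rw [hA, Finset.card_filter]
      push_cast
      rw [Finset.mul_sum]
      exact Finset.sum_congr rfl (fun a _ => by split <;> simp
      )
    rw [h1]
    have h2 : ∀ a : ZMod p, (if IsSquare (c - a^2) then (2:ℤ) else 0)
        = χ (c - a^2) + 1 + (if c - a^2 = 0 then (1:ℤ) else 0) := by
      intro a
      by_cases hx : c - a^2 = 0
      · rw [hx]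
        simp [hχ, quadraticChar_zero]
      · by_cases hs : IsSquare (c - a^2)
        · rw [if_pos hs, if_neg hx, (quadraticChar_one_iff_isSquare hx).mpr hs]; ring
        · rw [if_neg hs, if_neg hx, quadraticChar_neg_one_iff_not_isSquare.mpr hs]; ring
    rw [Finset.sum_congr rfl (fun a _ => h2 a)]
    rw [Finset.sum_add_distrib, Finset.sum_add_distrib]
    have h3 : ∑ a : ZMod p, χ (c - a^2) = -χ (-1) := by
      have he : ∀ a : ZMod p, χ (c - a^2) = χ (-1) * χ (a^2 - c) := by
        intro a
        rw [← map_mul]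
        congr 1; ring
      rw [Finset.sum_congr rfl (fun a _ => he a), ← Finset.mul_sum,
        chi_sum_sq_sub hodd c hc]
      ring
    have h4 : ∑ _a : ZMod p, (1:ℤ) = p := by
      rw [Finset.sum_const, Finset.card_univ, ZMod.card]; simp
    have h5 : ∑ a : ZMod p, (if c - a^2 = 0 then (1:ℤ) else 0) = χ c + 1 := by
      have : ∀ a : ZMod p, (if c - a^2 = 0 then (1:ℤ) else 0) = if a^2 = c then 1 else 0 := by
        intro a
        congr 1
        simp [sub_eq_zero, eq_comm]
      rw [Finset.sum_congr rfl (fun a _ => this a), ← hsqc c]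
      rw [Finset.card_filter]
      push_cast
      rfl
    rw [h3, h4, h5]
    ring
  have hmod : p % 4 = 1 ∨ p % 4 = 3 := by
    have h' : p % 2 = 1 := (Nat.Prime.mod_two_eq_one_iff_ne_two Fact.out).mpr hodd
    omega
  have hneg1ne : (-1 : ZMod p) ≠ 0 := by
    simp only [neg_ne_zero]
    exact one_ne_zero
  have hχneg : χ (-1) = if p % 4 = 1 then 1 else -1 := by
    rcases hmod with h | h
    · rw [if_pos h, (quadraticChar_one_iff_isSquare hneg1ne).mpr]
      rw [ZMod.exists_sq_eq_neg_one_iff]; omega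
    · rw [if_neg (by omega), quadraticChar_neg_one_iff_not_isSquare.mpr]
      rw [ZMod.exists_sq_eq_neg_one_iff]; omega
  have hcards : ((Finset.univ.filter (fun β : R p => Gnorm β = c)).image
        (fun β => Gnorm (((1 : ZMod p), (0 : ZMod p)) + β))).card = A.card := by
    rw [himg, Finset.card_image_of_injective _ hinj]
  constructor
  · intro hsq
    have hχc : χ c = 1 := (quadraticChar_one_iff_isSquare hc).mpr hsq
    rw [hcards]
    rw [hχc, hχneg] at hAcard
    rcases hmod with h | h
    · rw [if_pos h] at hAcard hn; omega
    · rw [if_neg (by omega)] at hAcard hn; omega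
  · intro hsq
    have hχc : χ c = -1 := quadraticChar_neg_one_iff_not_isSquare.mpr hsq
    rw [hcards]
    rw [hχc, hχneg] at hAcard
    rcases hmod with h | h
    · rw [if_pos h] at hAcard hn; omega
    · rw [if_neg (by omega)] at hAcard hn; omega
end

section
/- Let p > 3 be a prime with p ≡ ±5 (mod 12). Then there is no β ∈ ℤ[i]/pℤ[i] with N(β) = 1 and N(1+β) = 1. -/
lemma two_zmod3 : ¬ IsSquare (2 : ZMod 3) := by decide

lemma three_not_square (p : ℕ) (hp : p.Prime) (hp3 : 3 < p)
    (hmod : p % 12 = 5 ∨ p % 12 = 7) : ¬ IsSquare (3 : ZMod p) := by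
  haveI : Fact p.Prime := ⟨hp⟩
  haveI : Fact (Nat.Prime 3) := ⟨by norm_num⟩
  have hp4 : p % 4 = p % 12 % 4 := (Nat.mod_mod_of_dvd p (by norm_num)).symm
  have hp3' : p % 3 = p % 12 % 3 := (Nat.mod_mod_of_dvd p (by norm_num)).symm
  have hcast : ((3 : ℕ) : ZMod p) = (3 : ZMod p) := by push_cast; ring
  have hpcast : ((p : ZMod 3)) = ((p % 3 : ℕ) : ZMod 3) := (ZMod.natCast_mod p 3).symm
  rcases hmod with h | h
  · rw [← hcast, ZMod.exists_sq_eq_prime_iff_of_mod_four_eq_one (by omega) (by norm_num)]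
    rw [hpcast]
    have : p % 3 = 2 := by omega
    rw [this]
    have : ((2 : ℕ) : ZMod 3) = 2 := by norm_num
    rw [this]
    exact two_zmod3
  · rw [← hcast, ZMod.exists_sq_eq_prime_iff_of_mod_four_eq_three (by omega) (by norm_num)
      (by omega), not_not, hpcast]
    have : p % 3 = 1 := by omega
    rw [this]
    exact ⟨1, by norm_num⟩

/-- For a prime `p > 3` with `p ≡ ±5 (mod 12)`, there is no `β ∈ ℤ[i]/pℤ[i]` with
`N(β) = 1` and `N(1+β) = 1`. -/
theorem no_norm_one_neighbor (p : ℕ) (hp : p.Prime) (hp3 : 3 < p)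
    (hmod : p % 12 = 5 ∨ p % 12 = 7) :
    ¬ ∃ β : R p, Gnorm β = 1 ∧ Gnorm (((1 : ZMod p), (0 : ZMod p)) + β) = 1 := by
  rintro ⟨⟨a, b⟩, h1, h2⟩
  simp only [Gnorm, Prod.fst_add, Prod.snd_add] at h1 h2
  exact three_not_square p hp hp3 hmod
    ⟨2 * b, by linear_combination (2 * a - 1) * (h2 - h1) - 4 * h1⟩
end

section
/- Let p ≡ 1 (mod 4) be prime and let ζ ∈ ℤ[i]/pℤ[i] be a proper zero divisor (ζ ≠ 0 and N(ζ) = 0). Then ζH = {xζ : x ∈ ℤ/pℤ, x ≠ 0}, where H = {β : N(β) = 1}. -/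
/-- For `p ≡ 1 (mod 4)` prime and `ζ` a proper zero divisor of `ℤ[i]/pℤ[i]`
(`ζ ≠ 0`, `N(ζ) = 0`), the set `ζH` equals `{xζ : x ∈ ℤ/pℤ, x ≠ 0}`. -/
theorem zero_divisor_coset (p : ℕ) (hp : p.Prime) (hmod : p % 4 = 1)
    (ζ : R p) (hζ0 : ζ ≠ 0) (hζ : Gnorm ζ = 0) :
    {γ : R p | ∃ β : R p, Gnorm β = 1 ∧ γ = Gmul ζ β} =
      {γ : R p | ∃ x : ZMod p, x ≠ 0 ∧ γ = (x * ζ.1, x * ζ.2)} := by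
  haveI : Fact p.Prime := ⟨hp⟩
  obtain ⟨a, b⟩ := ζ
  simp only [Gnorm] at hζ
  have ha : a ≠ 0 := by
    intro h
    apply hζ0
    have hb : b = 0 := by
      have hb2 : b ^ 2 = 0 := by rw [h] at hζ; simpa using hζ
      exact pow_eq_zero_iff two_ne_zero |>.mp hb2
    simp [h, hb, Prod.ext_iff]
  have hb : b ≠ 0 := by
    intro h
    apply ha
    have ha2 : a ^ 2 = 0 := by rw [h] at hζ; simpa using hζ
    exact pow_eq_zero_iff two_ne_zero |>.mp ha2
  have h2 : (2 : ZMod p) ≠ 0 := by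
    intro h
    have hdvd : (p : ℕ) ∣ 2 :=
      (ZMod.natCast_eq_zero_iff 2 p).mp (by exact_mod_cast h)
    have := (Nat.prime_dvd_prime_iff_eq hp Nat.prime_two).mp hdvd
    omega
  obtain ⟨t, ht⟩ : ∃ t : ZMod p, t * a = b := ⟨b * a⁻¹, by field_simp⟩
  have ht2 : t ^ 2 = -1 := by
    have key : t ^ 2 * a ^ 2 = b ^ 2 := by linear_combination (t * a + b) * ht
    have ha2 : a ^ 2 ≠ 0 := pow_ne_zero 2 ha
    have : a ^ 2 * (t ^ 2 - (-1)) = 0 := by linear_combination key + hζ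
    rcases mul_eq_zero.mp this with h | h
    · exact absurd h ha2
    · linear_combination h
  ext ⟨u, v⟩
  simp only [Set.mem_setOf_eq, Gmul, Gnorm, Prod.mk.injEq]
  constructor
  · rintro ⟨⟨c, d⟩, hN, h1, h2'⟩
    simp only at h1 h2' hN
    refine ⟨c - t * d, ?_, ?_, ?_⟩
    · intro hx
      have hac : a * c = b * d := by
        have : (c - t * d) * a = 0 := by rw [hx]; ring
        linear_combination this + d * ht
      have key : a ^ 2 * (c ^ 2 + d ^ 2) = 0 := by
        linear_combination (a * c + b * d) * hac + d ^ 2 * hζ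
      rw [hN, mul_one] at key
      exact ha (pow_eq_zero_iff two_ne_zero |>.mp key)
    · rw [h1]; linear_combination d * ht
    · rw [h2']; linear_combination (a * d) * ht2 + (-(d * t)) * ht
  · rintro ⟨x, hx, h1, h2'⟩
    have ht0 : t ≠ 0 := by
      intro h
      apply hb; rw [← ht, h, zero_mul]
    obtain ⟨d, hd⟩ : ∃ d : ZMod p, 2 * t * x * d = 1 - x ^ 2 :=
      ⟨(1 - x ^ 2) / (2 * t * x), by field_simp⟩
    refine ⟨(x + t * d, d), ?_, ?_, ?_⟩
    · simp only [Gnorm]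
      linear_combination hd + d ^ 2 * ht2
    · rw [h1]; simp only
      linear_combination (-d) * ht
    · rw [h2']; simp only
      linear_combination (-(a * d)) * ht2 + (d * t) * ht
end

section
/- Let p ≡ 1 (mod 4) be prime and ζ ∈ ℤ[i]/pℤ[i] a proper zero divisor. Then {N(β + ζ) : β ∈ ℤ[i]/pℤ[i], N(β) = 1} = (ℤ/pℤ) \ {1}. -/
/-- For `p ≡ 1 (mod 4)` prime and `ζ` a proper zero divisor of `ℤ[i]/pℤ[i]`,
`{N(β + ζ) : N(β) = 1} = (ℤ/pℤ) \ {1}`. -/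
theorem norms_near_zero_divisor (p : ℕ) (hp : p.Prime) (hmod : p % 4 = 1)
    (ζ : R p) (hζ0 : ζ ≠ 0) (hζ : Gnorm ζ = 0) :
    {c : ZMod p | ∃ β : R p, Gnorm β = 1 ∧ Gnorm (β + ζ) = c} = {(1 : ZMod p)}ᶜ := by
  haveI : Fact p.Prime := ⟨hp⟩
  obtain ⟨a, b⟩ := ζ
  simp only [Gnorm] at hζ
  have hp2 : (2 : ZMod p) ≠ 0 := by
    intro h
    have hdvd : (p : ℕ) ∣ 2 :=
      (ZMod.natCast_eq_zero_iff 2 p).mp (by exact_mod_cast h)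
    have := (Nat.prime_dvd_prime_iff_eq hp Nat.prime_two).mp hdvd
    omega
  -- square root of -1
  obtain ⟨j, hj⟩ : IsSquare (-1 : ZMod p) :=
    (ZMod.exists_sq_eq_neg_one_iff (p := p)).mpr (by omega)
  have hj2 : j ^ 2 = -1 := by rw [sq]; exact hj.symm
  have ha : a ≠ 0 := by
    intro h
    subst h
    have hb : b = 0 := by
      have : b ^ 2 = 0 := by linear_combination hζ
      exact pow_eq_zero_iff (n := 2) (by norm_num) |>.mp this
    exact hζ0 (by simp [hb])
  obtain ⟨k, hk2, hb⟩ : ∃ k : ZMod p, k ^ 2 = -1 ∧ b = k * a := by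
    have hfac : (b - j * a) * (b + j * a) = 0 := by linear_combination hζ - a ^ 2 * hj2
    rcases mul_eq_zero.mp hfac with h | h
    · exact ⟨j, hj2, by linear_combination h⟩
    · exact ⟨-j, by ring_nf; linear_combination hj2, by linear_combination h⟩
  have hk : k ≠ 0 := by
    intro h
    rw [h] at hk2
    simp at hk2
  ext c
  simp only [Set.mem_setOf_eq, Set.mem_compl_iff, Set.mem_singleton_iff]
  constructor
  · rintro ⟨β, h1, hc⟩ hc1
    subst hc1
    simp only [Gnorm, Prod.fst_add, Prod.snd_add] at h1 hc
    have hunit : (β.1 + k * β.2) * (β.1 - k * β.2) = 1 := by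
      linear_combination h1 - β.2 ^ 2 * hk2
    have hne : β.1 + k * β.2 ≠ 0 := by
      intro h
      rw [h, zero_mul] at hunit
      exact one_ne_zero hunit.symm
    have hz : (2 : ZMod p) * a * (β.1 + k * β.2) = 0 := by
      linear_combination hc - h1 - hζ - 2 * β.2 * hb
    exact (mul_ne_zero (mul_ne_zero hp2 ha) hne) hz
  · intro hc
    have h2a : (2 : ZMod p) * a ≠ 0 := mul_ne_zero hp2 ha
    set u : ZMod p := (c - 1) * (2 * a)⁻¹ with hu_def
    have hu : u ≠ 0 := mul_ne_zero (sub_ne_zero.mpr hc) (inv_ne_zero h2a)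
    set v : ZMod p := u⁻¹ with hv_def
    have huv : u * v = 1 := mul_inv_cancel₀ hu
    have h2au : 2 * a * u = c - 1 := by
      rw [hu_def]; field_simp
    set i2 : ZMod p := 2⁻¹ with hi2_def
    have h2 : (2 : ZMod p) * i2 = 1 := mul_inv_cancel₀ hp2
    set ik : ZMod p := k⁻¹ with hik_def
    have hkik : k * ik = 1 := mul_inv_cancel₀ hk
    set x : ZMod p := (u + v) * i2 with hx_def
    set y : ZMod p := (u - v) * i2 * ik with hy_def
    have hxk : x + k * y = u := by
      rw [hx_def, hy_def]
      linear_combination (u - v) * i2 * hkik + u * h2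
    have hyk : x - k * y = v := by
      rw [hx_def, hy_def]
      linear_combination -(u - v) * i2 * hkik + v * h2
    have hN1 : x ^ 2 + y ^ 2 = 1 := by
      linear_combination (x + k * y) * hyk + v * hxk + huv + y ^ 2 * hk2
    refine ⟨(x, y), ?_, ?_⟩
    · simpa [Gnorm] using hN1
    · simp only [Gnorm, Prod.fst_add, Prod.snd_add]
      linear_combination hN1 + hζ + 2 * a * hxk + 2 * y * hb + h2au
end

section
/- Let p ≡ 1 (mod 4) be prime and t ∈ ℤ/pℤ, t ≠ 0. Then {N(1+β) : β ∈ ℤ[i]/pℤ[i], N(β) = t} = {x⁻¹(x+1)(x+t) : x ∈ ℤ/pℤ, x ≠ 0}. -/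
/-- For `p ≡ 1 (mod 4)` prime and `t ≠ 0` in `ℤ/pℤ`,
`{N(1+β) : N(β) = t} = {x⁻¹(x+1)(x+t) : x ≠ 0}`. -/
theorem Np_polynomial (p : ℕ) (hp : p.Prime) (hmod : p % 4 = 1) (t : ZMod p) (ht : t ≠ 0) :
    {c : ZMod p | ∃ β : R p, Gnorm β = t ∧ Gnorm (((1 : ZMod p), (0 : ZMod p)) + β) = c} =
      {c : ZMod p | ∃ x : ZMod p, x ≠ 0 ∧ c = x⁻¹ * (x + 1) * (x + t)} := by
  haveI : Fact p.Prime := ⟨hp⟩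
  have h2 : (2 : ZMod p) ≠ 0 := by
    intro h
    have hd : p ∣ 2 := by
      have := (CharP.cast_eq_zero_iff (ZMod p) p 2).mp (by exact_mod_cast h)
      exact_mod_cast this
    have h1 := Nat.le_of_dvd (by norm_num) hd
    have h3 := hp.two_le
    omega
  obtain ⟨r, hr⟩ : ∃ r : ZMod p, r ^ 2 = -1 := by
    obtain ⟨r, hr⟩ := (ZMod.exists_sq_eq_neg_one_iff (p := p)).mpr (by omega : p % 4 ≠ 3)
    exact ⟨r, by rw [sq]; exact hr.symm⟩
  ext c
  simp only [Set.mem_setOf_eq, Gnorm, Prod.fst_add, Prod.snd_add]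
  constructor
  · rintro ⟨⟨a, b⟩, hβ, hc⟩
    simp only at hβ hc
    have hx : a + r * b ≠ 0 := by
      intro h
      exact ht (by linear_combination -hβ + (a - r * b) * h + b ^ 2 * hr)
    refine ⟨a + r * b, hx, ?_⟩
    rw [← hc]
    field_simp
    rw [eq_div_iff (by rwa [mul_comm b r])]
    linear_combination (-(b ^ 2)) * hr + (a + r * b + 1) * hβ
  · rintro ⟨x, hx, hc⟩
    refine ⟨((x + x⁻¹ * t) / 2, r * (x - x⁻¹ * t) / 2), ?_, ?_⟩
    · field_simp
      linear_combination (x ^ 2 - t) ^ 2 * hr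
    · rw [hc]
      field_simp
      linear_combination (x ^ 2 - t) ^ 2 * hr
end

section
/- Let p be a prime and t ∈ ℤ/pℤ with t ≠ 0 and t ≠ 1. Then the cubic polynomial P_t(x,y) = y(x+1)² − x(y+1)(y+t) is irreducible over the algebraic closure of ℤ/pℤ (absolutely irreducible). -/
section Aux
open Polynomial

private lemma eq_mul_X' {K : Type*} [Field K] (u v : K[X]) (h : u * v = X) :
    (∃ c : K, c ≠ 0 ∧ u = C c ∧ v = C c⁻¹ * X) ∨
    (∃ c : K, c ≠ 0 ∧ u = C c * X ∧ v = C c⁻¹) := by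
  have hu : u ≠ 0 := by rintro rfl; simp at h; exact X_ne_zero h.symm
  have hv : v ≠ 0 := by rintro rfl; simp at h; exact X_ne_zero h.symm
  have hdeg : u.natDegree + v.natDegree = 1 := by
    rw [← natDegree_mul hu hv, h, natDegree_X]
  rcases Nat.eq_zero_or_pos u.natDegree with h0 | hpos
  · left
    obtain ⟨c, rfl⟩ := natDegree_eq_zero.mp h0
    have hc : c ≠ 0 := by rintro rfl; simp at hu
    refine ⟨c, hc, rfl, ?_⟩
    have h2 : C c⁻¹ * (C c * v) = C c⁻¹ * X := congrArg (C c⁻¹ * ·) h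
    rw [← mul_assoc, ← C_mul, inv_mul_cancel₀ hc, C_1, one_mul] at h2
    exact h2
  · right
    have h0v : v.natDegree = 0 := by omega
    obtain ⟨c, rfl⟩ := natDegree_eq_zero.mp h0v
    have hc : c ≠ 0 := by rintro rfl; simp at hv
    refine ⟨c⁻¹, inv_ne_zero hc, ?_, by rw [inv_inv]⟩
    have h2 : u * C c * C c⁻¹ = X * C c⁻¹ := congrArg (· * C c⁻¹) h
    rw [mul_assoc, ← C_mul, mul_inv_cancel₀ hc, C_1, mul_one] at h2
    rw [h2]; ring

private lemma coeffs_of_quad_eq' {R : Type*} [Semiring R] {A B C₀ A' B' C' : R}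
    (h : (C A * X ^ 2 + C B * X + C C₀ : R[X]) = C A' * X ^ 2 + C B' * X + C C') :
    A = A' ∧ B = B' ∧ C₀ = C' := by
  have h2 := congrArg (fun f => Polynomial.coeff f 2) h
  have h1 := congrArg (fun f => Polynomial.coeff f 1) h
  have h0 := congrArg (fun f => Polynomial.coeff f 0) h
  simp [coeff_add, coeff_C_mul, coeff_X_pow, coeff_X, coeff_C] at h2 h1 h0
  exact ⟨h2, h1, h0⟩

private lemma quad_irred' {K : Type*} [Field K] (s : K) (hs0 : s ≠ 0) (hs1 : s ≠ 1) :
    Irreducible ((C X * X ^ 2 + C (2 * X - (X + 1) * (X + C s)) * X + C X :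
      (K[X])[X])) := by
  set m : K[X] := 2 * X - (X + 1) * (X + C s) with hm_def
  set q : (K[X])[X] := C X * X ^ 2 + C m * X + C X with hq_def
  have hm : m = C (-1 : K) * X ^ 2 + C (1 - s) * X + C (-s) := by
    simp only [hm_def, C_sub, C_neg, C_1]; ring
  have hmc0 : m.coeff 0 = -s := by rw [hm]; simp [coeff_add, coeff_C_mul, coeff_X_pow, coeff_C]
  have hqdeg : q.natDegree = 2 := natDegree_quadratic X_ne_zero
  have hq0 : q ≠ 0 := fun h => by simp [h] at hqdeg
  have key : ∀ g : K[X], ∀ h : (K[X])[X], q = C g * h → IsUnit g := by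
    intro g h hqe
    have e0 : g * h.coeff 0 = X := by
      have := congrArg (fun f => Polynomial.coeff f 0) hqe
      simpa [hq_def, coeff_add, coeff_C_mul, coeff_X_pow, coeff_X, coeff_C] using this.symm
    have e1 : g * h.coeff 1 = m := by
      have := congrArg (fun f => Polynomial.coeff f 1) hqe
      simpa [hq_def, coeff_add, coeff_C_mul, coeff_X_pow, coeff_X, coeff_C] using this.symm
    rcases eq_mul_X' _ _ e0 with ⟨c, hc, rfl, -⟩ | ⟨c, hc, rfl, -⟩
    · exact (isUnit_C.mpr (isUnit_iff_ne_zero.mpr hc))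
    · exfalso
      have : m.coeff 0 = 0 := by
        rw [← e1, mul_coeff_zero]
        simp
      rw [hmc0] at this
      exact hs0 (by simpa using this)
  constructor
  · intro hu
    have := natDegree_eq_zero_of_isUnit hu
    omega
  · intro a b hq
    have ha : a ≠ 0 := fun h => hq0 (by rw [hq, h, zero_mul])
    have hb : b ≠ 0 := fun h => hq0 (by rw [hq, h, mul_zero])
    have hd : a.natDegree + b.natDegree = 2 := by
      rw [← natDegree_mul ha hb, ← hq, hqdeg]
    rcases Nat.lt_or_ge a.natDegree 1 with h0a | h1a
    · obtain ⟨g, rfl⟩ := natDegree_eq_zero.mp (show a.natDegree = 0 by omega)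
      exact Or.inl (isUnit_C.mpr (key g b hq))
    rcases Nat.lt_or_ge b.natDegree 1 with h0b | h1b
    · obtain ⟨g, rfl⟩ := natDegree_eq_zero.mp (show b.natDegree = 0 by omega)
      exact Or.inr (isUnit_C.mpr (key g a (by rw [hq]; ring)))
    exfalso
    have hda : a.natDegree = 1 := by omega
    have hdb : b.natDegree = 1 := by omega
    set a1 := a.coeff 1 with ha1
    set a0 := a.coeff 0 with ha0
    set b1 := b.coeff 1 with hb1
    set b0 := b.coeff 0 with hb0
    have haf : a = C a1 * X + C a0 := a.eq_X_add_C_of_natDegree_le_one (by omega)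
    have hbf : b = C b1 * X + C b0 := b.eq_X_add_C_of_natDegree_le_one (by omega)
    have h3 : (C X * X ^ 2 + C m * X + C X : (K[X])[X]) =
        C (a1 * b1) * X ^ 2 + C (a1 * b0 + a0 * b1) * X + C (a0 * b0) := by
      rw [← hq_def, hq, haf, hbf]
      simp only [C_mul, C_add]; ring
    obtain ⟨e2, e1, e0⟩ := coeffs_of_quad_eq' h3
    rcases eq_mul_X' _ _ e2.symm with ⟨c, hc, hA1, hB1⟩ | ⟨c, hc, hA1, hB1⟩ <;>
      rcases eq_mul_X' _ _ e0.symm with ⟨d, hd', hA0, hB0⟩ | ⟨d, hd', hA0, hB0⟩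
    · rw [hA1, hB1, hA0, hB0, hm] at e1
      have h4 : (C 0 * X ^ 2 + C (c * d⁻¹ + d * c⁻¹) * X + C 0 : K[X]) =
          C (-1 : K) * X ^ 2 + C (1 - s) * X + C (-s) := by
        rw [e1]; simp only [C_add, C_mul, C_0]; ring
      have := (coeffs_of_quad_eq' h4).1
      exact one_ne_zero (α := K) (by linear_combination this)
    · rw [hA1, hB1, hA0, hB0, hm] at e1
      have h4 : (C (d * c⁻¹) * X ^ 2 + C 0 * X + C (c * d⁻¹) : K[X]) =
          C (-1 : K) * X ^ 2 + C (1 - s) * X + C (-s) := by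
        rw [e1]; simp only [C_add, C_mul, C_0]; ring
      have := (coeffs_of_quad_eq' h4).2.1
      exact hs1 (by linear_combination this)
    · rw [hA1, hB1, hA0, hB0, hm] at e1
      have h4 : (C (c * d⁻¹) * X ^ 2 + C 0 * X + C (d * c⁻¹) : K[X]) =
          C (-1 : K) * X ^ 2 + C (1 - s) * X + C (-s) := by
        rw [e1]; simp only [C_add, C_mul, C_0]; ring
      have := (coeffs_of_quad_eq' h4).2.1
      exact hs1 (by linear_combination this)
    · rw [hA1, hB1, hA0, hB0, hm] at e1
      have h4 : (C 0 * X ^ 2 + C (c * d⁻¹ + d * c⁻¹) * X + C 0 : K[X]) =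
          C (-1 : K) * X ^ 2 + C (1 - s) * X + C (-s) := by
        rw [e1]; simp only [C_add, C_mul, C_0]; ring
      have := (coeffs_of_quad_eq' h4).1
      exact one_ne_zero (α := K) (by linear_combination this)

end Aux

open MvPolynomial

/-- For `p` prime and `t ∈ ℤ/pℤ` with `t ≠ 0, 1`, the cubic polynomial
`P_t(x,y) = y(x+1)² − x(y+1)(y+t)` is absolutely irreducible, i.e. irreducible
over the algebraic closure of `ℤ/pℤ`. -/
theorem Pt_absolutely_irreducible (p : ℕ) [Fact p.Prime] (t : ZMod p)
    (ht0 : t ≠ 0) (ht1 : t ≠ 1) :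
    Irreducible
      ((X 1 * (X 0 + 1) ^ 2 -
          X 0 * (X 1 + 1) * (X 1 + C (algebraMap (ZMod p) (AlgebraicClosure (ZMod p)) t))) :
        MvPolynomial (Fin 2) (AlgebraicClosure (ZMod p))) := by
  set K := AlgebraicClosure (ZMod p)
  set s : K := algebraMap (ZMod p) K t with hs_def
  have hinj := (algebraMap (ZMod p) K).injective
  have hs0 : s ≠ 0 := fun h => ht0 (hinj (by rw [map_zero]; exact h))
  have hs1 : s ≠ 1 := fun h => ht1 (hinj (by rw [map_one]; exact h))
  let g : MvPolynomial (Fin 1) K ≃ₐ[K] Polynomial K :=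
    (MvPolynomial.finSuccEquiv K 0).trans
      (Polynomial.mapAlgEquiv (MvPolynomial.isEmptyAlgEquiv K (Fin 0)))
  let e : MvPolynomial (Fin 2) K ≃ₐ[K] Polynomial (Polynomial K) :=
    (MvPolynomial.finSuccEquiv K 1).trans (Polynomial.mapAlgEquiv g)
  rw [← MulEquiv.irreducible_iff e.toMulEquiv]
  have hX0 : e (MvPolynomial.X 0) = Polynomial.X := by
    simp [e, g, MvPolynomial.finSuccEquiv_X_zero]
  have hX1 : e (MvPolynomial.X 1) = Polynomial.C Polynomial.X := by
    show (Polynomial.mapAlgEquiv g)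
      ((MvPolynomial.finSuccEquiv K 1) (MvPolynomial.X (Fin.succ 0))) = Polynomial.C Polynomial.X
    rw [MvPolynomial.finSuccEquiv_X_succ]
    simp [g, Polynomial.coe_mapAlgEquiv, MvPolynomial.finSuccEquiv_X_zero]
  have hC : e (MvPolynomial.C s) = Polynomial.C (Polynomial.C s) := by
    rw [← MvPolynomial.algebraMap_eq, AlgEquiv.commutes]
    rfl
  show Irreducible (e (MvPolynomial.X 1 * (MvPolynomial.X 0 + 1) ^ 2 -
      MvPolynomial.X 0 * (MvPolynomial.X 1 + 1) * (MvPolynomial.X 1 + MvPolynomial.C s)))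
  have heP : e (MvPolynomial.X 1 * (MvPolynomial.X 0 + 1) ^ 2 -
      MvPolynomial.X 0 * (MvPolynomial.X 1 + 1) * (MvPolynomial.X 1 + MvPolynomial.C s)) =
      Polynomial.C Polynomial.X * (Polynomial.X + 1) ^ 2 -
        Polynomial.X * (Polynomial.C Polynomial.X + 1) *
          (Polynomial.C Polynomial.X + Polynomial.C (Polynomial.C s)) := by
    simp only [map_sub, map_mul, map_add, map_pow, map_one, hX0, hX1, hC]
  rw [heP]
  have hform : (Polynomial.C Polynomial.X * (Polynomial.X + 1) ^ 2 -
        Polynomial.X * (Polynomial.C Polynomial.X + 1) *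
          (Polynomial.C Polynomial.X + Polynomial.C (Polynomial.C s)) :
        Polynomial (Polynomial K)) =
      Polynomial.C Polynomial.X * Polynomial.X ^ 2 +
        Polynomial.C (2 * Polynomial.X -
          (Polynomial.X + 1) * (Polynomial.X + Polynomial.C s)) * Polynomial.X +
        Polynomial.C Polynomial.X := by
    simp only [Polynomial.C_sub, Polynomial.C_add, Polynomial.C_mul, Polynomial.C_1, map_ofNat]
    ring
  rw [hform]
  exact quad_irred' s hs0 hs1
end

section
/- Let p be an odd prime with p ≡ 3 (mod 4) and n = (p+1)/2. In the Cayley graph G_p on the additive group ℤ[i]/pℤ[i] with connection set H = {β : N(β) = 1}, every vertex is at distance at most 3 from 0; i.e., every element of ℤ[i]/pℤ[i] is a sum of at most 3 elements of H. -/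
open Finset

section Aux
variable {p : ℕ} [Fact p.Prime]

/-- number of square roots of `t` in `ZMod p` -/
private def cnt (t : ZMod p) : ℕ := #(univ.filter fun y : ZMod p => y ^ 2 = t)

private lemma twoNeZero (hmod : p % 4 = 3) : (2 : ZMod p) ≠ 0 := by
  have : ((2 : ℕ) : ZMod p) ≠ 0 := by
    rw [Ne, ZMod.natCast_eq_zero_iff]
    intro h
    have h2 := (Nat.le_of_dvd (by norm_num) h)
    have := (Fact.out : p.Prime).two_le
    omega
  simpa using this

private lemma not_sq_neg_one (hmod : p % 4 = 3) : ¬ IsSquare (-1 : ZMod p) := by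
  rw [ZMod.exists_sq_eq_neg_one_iff]
  simp [hmod]

private lemma ringChar_ne_two (hmod : p % 4 = 3) : ringChar (ZMod p) ≠ 2 := by
  rw [ZMod.ringChar_zmod_n]
  have := (Fact.out : p.Prime).two_le
  omega

private lemma cnt_eq (t : ZMod p) (hmod : p % 4 = 3) :
    (cnt t : ℤ) = quadraticChar (ZMod p) t + 1 := by
  rw [cnt, ← quadraticChar_card_sqrts (ringChar_ne_two hmod) t]
  norm_cast
  congr 1
  simp [Set.toFinset_setOf]

private lemma cnt_pair (hmod : p % 4 = 3) (t : ZMod p) : cnt t + cnt (-t) = 2 := by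
  have hneg : quadraticChar (ZMod p) (-1) = -1 := by
    rcases quadraticChar_dichotomy (F := ZMod p) (a := -1) (by
      exact neg_ne_zero.mpr one_ne_zero) with h | h
    · exact absurd ((quadraticChar_one_iff_isSquare (neg_ne_zero.mpr one_ne_zero)).mp h)
        (not_sq_neg_one hmod)
    · exact h
  have h1 := cnt_eq t hmod
  have h2 := cnt_eq (-t) hmod
  have h3 : quadraticChar (ZMod p) (-t) = - quadraticChar (ZMod p) t := by
    rw [show (-t : ZMod p) = -1 * t by ring, map_mul, hneg]; ring
  have : (cnt t + cnt (-t) : ℤ) = 2 := by rw [h1, h2, h3]; ring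
  exact_mod_cast this

private lemma cnt_le_two (hmod : p % 4 = 3) (t : ZMod p) : cnt t ≤ 2 := by
  have := cnt_pair hmod t; omega

private lemma aniso (hmod : p % 4 = 3) {a b : ZMod p} (h : a ^ 2 + b ^ 2 = 0) :
    a = 0 ∧ b = 0 := by
  by_cases hb : b = 0
  · subst hb
    have ha : a ^ 2 = 0 := by simpa using h
    exact ⟨by simpa using pow_eq_zero_iff (n := 2) (by norm_num) |>.mp ha, rfl⟩
  · exfalso
    apply not_sq_neg_one hmod
    refine ⟨a * b⁻¹, ?_⟩
    field_simp
    linear_combination -h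

private lemma card_prod_filter (P : ZMod p × ZMod p → Prop) [DecidablePred P] :
    #(univ.filter P) = ∑ x : ZMod p, #(univ.filter fun y => P (x, y)) := by
  rw [Finset.card_eq_sum_card_fiberwise (f := Prod.fst) (t := univ)
    (fun z _ => mem_univ z.1)]
  refine Finset.sum_congr rfl fun x _ => ?_
  refine Finset.card_bij' (fun z _ => z.2) (fun y _ => (x, y)) ?_ ?_ ?_ ?_
  · intro z hz
    simp only [mem_filter, mem_univ, true_and] at hz ⊢
    obtain ⟨h1, h2⟩ := hz
    rw [show (x, z.2) = z from Prod.ext h2.symm rfl]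
    exact h1
  · intro y hy
    simp only [mem_filter, mem_univ, true_and] at hy ⊢
    exact ⟨hy, trivial⟩
  · intro z hz
    simp only [mem_filter, mem_univ, true_and] at hz
    exact Prod.ext hz.2.symm rfl
  · intro y _; rfl

private lemma hyp_card (htwo : (2 : ZMod p) ≠ 0) {d : ZMod p} (hd : d ≠ 0) :
    #(univ.filter fun z : ZMod p × ZMod p => z.1 ^ 2 - z.2 ^ 2 = d) = p - 1 := by
  have key : #(univ.filter fun z : ZMod p × ZMod p => z.1 ^ 2 - z.2 ^ 2 = d)
      = #(univ.filter fun u : ZMod p => u ≠ 0) := by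
    refine Finset.card_bij' (fun z _ => z.1 + z.2)
      (fun u _ => ((u + d / u) / 2, (u - d / u) / 2)) ?_ ?_ ?_ ?_
    · intro z hz
      simp only [mem_filter, mem_univ, true_and] at hz ⊢
      intro h0
      apply hd
      rw [← hz]
      linear_combination (z.1 - z.2) * h0
    · intro u hu
      simp only [mem_filter, mem_univ, true_and] at hu ⊢
      field_simp
      ring
    · intro z hz
      simp only [mem_filter, mem_univ, true_and] at hz
      have h0 : z.1 + z.2 ≠ 0 := by
        intro h0; apply hd; rw [← hz]; linear_combination (z.1 - z.2) * h0
      have hdu : d / (z.1 + z.2) = z.1 - z.2 := by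
        field_simp; linear_combination -hz
      refine Prod.ext ?_ ?_ <;> simp only [hdu] <;> field_simp <;> ring
    · intro u hu
      simp only [mem_filter, mem_univ, true_and] at hu
      field_simp
      ring
  rw [key, Finset.filter_ne' univ 0, Finset.card_erase_of_mem (mem_univ 0),
    Finset.card_univ, ZMod.card]

private lemma sum_hyp (htwo : (2 : ZMod p) ≠ 0) {d : ZMod p} (hd : d ≠ 0) :
    ∑ x : ZMod p, cnt (x ^ 2 - d) = p - 1 := by
  rw [← hyp_card htwo hd, card_prod_filter]
  refine Finset.sum_congr rfl fun x _ => ?_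
  simp only [cnt]
  congr 1
  ext y
  simp only [mem_filter, mem_univ, true_and]
  constructor <;> intro h <;> linear_combination -h

private lemma sum_circ (hmod : p % 4 = 3) {s : ZMod p} (hs : s ≠ 0) :
    ∑ x : ZMod p, cnt (s - x ^ 2) = p + 1 := by
  have htwo := twoNeZero hmod
  have hsum : ∑ x : ZMod p, (cnt (s - x ^ 2) + cnt (x ^ 2 - s)) = 2 * p := by
    have hterm : ∀ x : ZMod p, cnt (s - x ^ 2) + cnt (x ^ 2 - s) = 2 := by
      intro x
      have := cnt_pair hmod (s - x ^ 2)
      rwa [show -(s - x ^ 2) = x ^ 2 - s by ring] at this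
    rw [Finset.sum_congr rfl fun x _ => hterm x, Finset.sum_const, Finset.card_univ, ZMod.card]
    ring
  rw [Finset.sum_add_distrib] at hsum
  have h2 := sum_hyp htwo hs
  have hp1 : 1 ≤ p := (Fact.out : p.Prime).one_lt.le.trans' (by norm_num)
  omega

private lemma bound_filter (hmod : p % 4 = 3) (g : ZMod p → ZMod p)
    (h : ∑ x : ZMod p, cnt (g x) = p + 1) :
    p + 1 ≤ 2 * #(univ.filter fun x => 0 < cnt (g x)) := by
  have hsplit := Finset.sum_filter_add_sum_filter_not univ
    (fun x => 0 < cnt (g x)) (fun x => cnt (g x))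
  have hzero : ∑ x ∈ univ.filter (fun x => ¬ 0 < cnt (g x)), cnt (g x) = 0 := by
    refine Finset.sum_eq_zero fun x hx => ?_
    simp only [mem_filter, mem_univ, true_and] at hx
    omega
  have hle : ∑ x ∈ univ.filter (fun x => 0 < cnt (g x)), cnt (g x)
      ≤ #(univ.filter fun x => 0 < cnt (g x)) * 2 :=
    Finset.sum_le_card_nsmul _ _ 2 fun x _ => cnt_le_two hmod _
  omega

private lemma exists_good (hmod : p % 4 = 3) (s : ZMod p) (hs : s ≠ 0) :
    ∃ c t y : ZMod p, t ^ 2 = s - c ^ 2 ∧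
      y ^ 2 = (s + 1 - 2 * c) * (4 - (s + 1 - 2 * c)) := by
  classical
  have htwo := twoNeZero hmod
  have hfour : (4 : ZMod p) ≠ 0 := by
    rw [show (4 : ZMod p) = 2 * 2 by norm_num]
    exact mul_ne_zero htwo htwo
  set A : Finset (ZMod p) := univ.filter fun c => 0 < cnt (s - c ^ 2) with hA
  set T : Finset (ZMod p) := univ.filter fun w => 0 < cnt (w * (4 - w)) with hT
  have hAbound : p + 1 ≤ 2 * #A := bound_filter hmod _ (sum_circ hmod hs)
  have hTsum : ∑ w : ZMod p, cnt (w * (4 - w)) = p + 1 := by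
    rw [Fintype.sum_equiv (Equiv.subRight (2 : ZMod p))
      (fun w => cnt (w * (4 - w))) (fun x => cnt (4 - x ^ 2))
      (fun w => by congr 1; simp [Equiv.subRight]; ring)]
    exact sum_circ hmod hfour
  have hTbound : p + 1 ≤ 2 * #T := bound_filter hmod _ hTsum
  set A2 : Finset (ZMod p) := A.image (fun c => s + 1 - 2 * c) with hA2
  have hinj : Function.Injective (fun c : ZMod p => s + 1 - 2 * c) := by
    intro a b hab
    simp only at hab
    have h2 : 2 * a = 2 * b := by linear_combination -hab
    exact mul_left_cancel₀ htwo h2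
  have hA2card : #A2 = #A := Finset.card_image_of_injective A hinj
  have hinter : (A2 ∩ T).Nonempty := by
    by_contra hcon
    rw [Finset.not_nonempty_iff_eq_empty] at hcon
    have hd : Disjoint A2 T := Finset.disjoint_iff_inter_eq_empty.mpr hcon
    have hu := Finset.card_union_of_disjoint hd
    have hle : #(A2 ∪ T) ≤ p := by
      have := Finset.card_le_univ (A2 ∪ T)
      rwa [ZMod.card] at this
    omega
  obtain ⟨w, hw⟩ := hinter
  rw [Finset.mem_inter] at hw
  obtain ⟨hw1, hw2⟩ := hw
  rw [hA2, Finset.mem_image] at hw1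
  obtain ⟨c, hcA, hcw⟩ := hw1
  rw [hA, mem_filter] at hcA
  rw [hT, mem_filter] at hw2
  have h1 : ∃ t : ZMod p, t ^ 2 = s - c ^ 2 := by
    have := Finset.card_pos.mp hcA.2
    obtain ⟨t, ht⟩ := this
    rw [mem_filter] at ht
    exact ⟨t, ht.2⟩
  have h2 : ∃ y : ZMod p, y ^ 2 = w * (4 - w) := by
    have := Finset.card_pos.mp hw2.2
    obtain ⟨y, hy⟩ := this
    rw [mem_filter] at hy
    exact ⟨y, hy.2⟩
  obtain ⟨t, ht⟩ := h1
  obtain ⟨y, hy⟩ := h2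
  exact ⟨c, t, y, ht, by rw [hcw]; exact hy⟩

end Aux

/-- For a prime `p ≡ 3 (mod 4)` with `n = (p+1)/2`: in the Cayley graph of
`ℤ[i]/pℤ[i]` with connection set `H = {β : N(β) = 1}`, every vertex is at distance at
most `3` from `0`, i.e. every element is a sum of at most three norm-one elements. -/
theorem diameter_three_of_three_mod_four (p n : ℕ) (hp : p.Prime) (hmod : p % 4 = 3)
    (hn : n = (p + 1) / 2) (γ : R p) :
    ∃ k ≤ 3, ∃ f : Fin k → R p, (∀ j, Gnorm (f j) = 1) ∧ γ = ∑ j, f j := by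
  haveI : Fact p.Prime := ⟨hp⟩
  have htwo := twoNeZero hmod
  by_cases hγ : γ = 0
  · exact ⟨0, by norm_num, ![], fun j => j.elim0, by simp [hγ]⟩
  have hsdef : γ.1 ^ 2 + γ.2 ^ 2 = Gnorm γ := rfl
  set s : ZMod p := Gnorm γ with hsd
  have hs0 : s ≠ 0 := by
    intro h
    obtain ⟨h1, h2⟩ := aniso hmod (hsdef.trans h)
    exact hγ (Prod.ext h1 h2)
  obtain ⟨c, t, y, ht, hy⟩ := exists_good hmod s hs0
  obtain ⟨w, hwd⟩ : ∃ w : ZMod p, w = s + 1 - 2 * c := ⟨_, rfl⟩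
  rw [← hwd] at hy
  -- first step
  set β : R p := ((c * γ.1 - t * γ.2) / s, (c * γ.2 + t * γ.1) / s) with hβ
  have hβnorm : Gnorm β = 1 := by
    have key : (c * γ.1 - t * γ.2) ^ 2 + (c * γ.2 + t * γ.1) ^ 2 = s ^ 2 := by
      linear_combination (γ.1 ^ 2 + γ.2 ^ 2) * ht + s * hsdef
    show ((c * γ.1 - t * γ.2) / s) ^ 2 + ((c * γ.2 + t * γ.1) / s) ^ 2 = 1
    rw [div_pow, div_pow, ← add_div, key]
    exact div_self (pow_ne_zero 2 hs0)
  set δ : R p := γ - β with hδ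
  have e1 : δ.1 = ((s - c) * γ.1 + t * γ.2) / s := by
    show γ.1 - (c * γ.1 - t * γ.2) / s = _
    field_simp
    ring
  have e2 : δ.2 = ((s - c) * γ.2 - t * γ.1) / s := by
    show γ.2 - (c * γ.2 + t * γ.1) / s = _
    field_simp
    ring
  have hδnorm : Gnorm δ = w := by
    have key : ((s - c) * γ.1 + t * γ.2) ^ 2 + ((s - c) * γ.2 - t * γ.1) ^ 2
        = s ^ 2 * w := by
      linear_combination (γ.1 ^ 2 + γ.2 ^ 2) * ht + s * w * hsdef
        - (γ.1 ^ 2 + γ.2 ^ 2) * s * hwd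
    show δ.1 ^ 2 + δ.2 ^ 2 = w
    rw [e1, e2, div_pow, div_pow, ← add_div, key, mul_comm,
      mul_div_assoc, div_self (pow_ne_zero 2 hs0), mul_one]
  by_cases hδ0 : δ = 0
  · refine ⟨1, by norm_num, ![β], ?_, ?_⟩
    · intro j; fin_cases j <;> simpa using hβnorm
    · have hγβ : γ = β := sub_eq_zero.mp (hδ ▸ hδ0 : γ - β = 0)
      simp [hγβ]
  -- second and third steps
  have hw0 : w ≠ 0 := by
    intro h
    rw [← hδnorm] at h
    obtain ⟨h1, h2⟩ := aniso hmod h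
    exact hδ0 (Prod.ext h1 h2)
  have hδdef : δ.1 ^ 2 + δ.2 ^ 2 = w := hδnorm
  have h2w : (2 : ZMod p) * w ≠ 0 := mul_ne_zero htwo hw0
  set β₂ : R p := ((w * δ.1 - y * δ.2) / (2 * w), (w * δ.2 + y * δ.1) / (2 * w)) with hβ₂
  set β₃ : R p := ((w * δ.1 + y * δ.2) / (2 * w), (w * δ.2 - y * δ.1) / (2 * w)) with hβ₃
  have hβ₂norm : Gnorm β₂ = 1 := by
    have key : (w * δ.1 - y * δ.2) ^ 2 + (w * δ.2 + y * δ.1) ^ 2 = (2 * w) ^ 2 := by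
      linear_combination (δ.1 ^ 2 + δ.2 ^ 2) * hy + (4 * w) * hδdef
    show ((w * δ.1 - y * δ.2) / (2 * w)) ^ 2 + ((w * δ.2 + y * δ.1) / (2 * w)) ^ 2 = 1
    rw [div_pow, div_pow, ← add_div, key]
    exact div_self (pow_ne_zero 2 h2w)
  have hβ₃norm : Gnorm β₃ = 1 := by
    have key : (w * δ.1 + y * δ.2) ^ 2 + (w * δ.2 - y * δ.1) ^ 2 = (2 * w) ^ 2 := by
      linear_combination (δ.1 ^ 2 + δ.2 ^ 2) * hy + (4 * w) * hδdef
    show ((w * δ.1 + y * δ.2) / (2 * w)) ^ 2 + ((w * δ.2 - y * δ.1) / (2 * w)) ^ 2 = 1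
    rw [div_pow, div_pow, ← add_div, key]
    exact div_self (pow_ne_zero 2 h2w)
  have hsumδ : β₂ + β₃ = δ := by
    refine Prod.ext ?_ ?_ <;>
      simp only [hβ₂, hβ₃, Prod.fst_add, Prod.snd_add] <;> field_simp <;> ring
  refine ⟨3, le_refl 3, ![β, β₂, β₃], ?_, ?_⟩
  · intro j; fin_cases j <;> simp [hβnorm, hβ₂norm, hβ₃norm]
  · rw [Fin.sum_univ_three]
    show γ = β + β₂ + β₃
    rw [add_assoc, hsumδ, hδ]
    abel
end
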